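/- Let A be an r×r real symmetric positive definite matrix and let S be an r×r real symmetric matrix. Then there exists a unique matrix S' ∈ ℝ^{r×r} such that S' + S'ᵀ = S and S'A = AS'ᵀ (equivalently, S'A is symmetric). -/

import Mathlib

open Matrix

private lemma trace_transpose_mul_self_nonneg {r : ℕ} (X : Matrix (Fin r) (Fin r) ℝ) :
    0 ≤ (Xᵀ * X).trace := by
  rw [Matrix.trace]
  refine Finset.sum_nonneg fun i _ => ?_
  rw [Matrix.diag_apply, Matrix.mul_apply]
  refine Finset.sum_nonneg fun j _ => ?_
  simp only [Matrix.transpose_apply]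
  exact mul_self_nonneg _

private lemma eq_zero_of_trace_transpose_mul_self {r : ℕ} (X : Matrix (Fin r) (Fin r) ℝ)
    (h : (Xᵀ * X).trace = 0) : X = 0 := by
  ext i j
  rw [Matrix.trace] at h
  have hterm : ∀ k ∈ Finset.univ, (0:ℝ) ≤ (Xᵀ * X).diag k := by
    intro k _
    rw [Matrix.diag_apply, Matrix.mul_apply]
    refine Finset.sum_nonneg fun l _ => ?_
    simp only [Matrix.transpose_apply]
    exact mul_self_nonneg _
  have hdiag := (Finset.sum_eq_zero_iff_of_nonneg hterm).mp h j (Finset.mem_univ j)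
  rw [Matrix.diag_apply, Matrix.mul_apply] at hdiag
  have hterm2 : ∀ l ∈ Finset.univ, (0:ℝ) ≤ Xᵀ j l * X l j := by
    intro l _
    simp only [Matrix.transpose_apply]
    exact mul_self_nonneg _
  have h2 := (Finset.sum_eq_zero_iff_of_nonneg hterm2).mp hdiag i (Finset.mem_univ i)
  simp only [Matrix.transpose_apply] at h2
  simpa using mul_self_eq_zero.mp h2

private lemma lyapunov_inj {r : ℕ} {A : Matrix (Fin r) (Fin r) ℝ} (hA : A.PosDef)
    {X : Matrix (Fin r) (Fin r) ℝ} (h : A * X + X * A = 0) : X = 0 := by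
  -- take the psd square root B of A
  have hAsd := hA.posSemidef
  obtain ⟨B, hBB, hBherm⟩ : ∃ B : Matrix (Fin r) (Fin r) ℝ, B * B = A ∧ Bᴴ = B := by
    open scoped MatrixOrder in
    exact ⟨CFC.sqrt A, CFC.sqrt_mul_sqrt_self A hAsd.nonneg, (CFC.sqrt_nonneg A).posSemidef.1⟩
  have hBt : Bᵀ = B := by
    rw [← Matrix.conjTranspose_eq_transpose_of_trivial]; exact hBherm
  have hBdet : B.det ≠ 0 := by
    intro h0
    have : A.det = 0 := by rw [← hBB, Matrix.det_mul, h0, mul_zero]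
    exact (ne_of_gt hA.det_pos) this
  -- trace argument
  have htr : ((B * X)ᵀ * (B * X)).trace + ((X * B)ᵀ * (X * B)).trace = 0 := by
    have h1 : Xᵀ * (A * X + X * A) = 0 := by rw [h, Matrix.mul_zero]
    have h2 : (Xᵀ * (A * X) + Xᵀ * (X * A)).trace = 0 := by
      rw [← Matrix.mul_add, h1, Matrix.trace_zero]
    rw [Matrix.trace_add] at h2
    have e1 : ((B * X)ᵀ * (B * X)).trace = (Xᵀ * (A * X)).trace := by
      have he : (B * X)ᵀ * (B * X) = Xᵀ * (A * X) := by
        rw [Matrix.transpose_mul, hBt, ← hBB]; noncomm_ring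
      rw [he]
    have e2 : ((X * B)ᵀ * (X * B)).trace = (Xᵀ * (X * A)).trace := by
      have he : (X * B)ᵀ * (X * B) = Bᵀ * (Xᵀ * X * B) := by
        rw [Matrix.transpose_mul]; noncomm_ring
      rw [he, hBt, Matrix.trace_mul_comm, Matrix.mul_assoc, hBB]
      congr 1
      noncomm_ring
    rw [e1, e2, h2]
  have hn1 := trace_transpose_mul_self_nonneg (B * X)
  have hn2 := trace_transpose_mul_self_nonneg (X * B)
  have hz1 : ((B * X)ᵀ * (B * X)).trace = 0 := by linarith
  have hBX : B * X = 0 := eq_zero_of_trace_transpose_mul_self _ hz1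
  calc X = (B⁻¹ * B) * X := by rw [Matrix.nonsing_inv_mul B (isUnit_iff_ne_zero.mpr hBdet), Matrix.one_mul]
  _ = B⁻¹ * (B * X) := by rw [Matrix.mul_assoc]
  _ = 0 := by rw [hBX, Matrix.mul_zero]

private lemma lyapunov_exists {r : ℕ} {A : Matrix (Fin r) (Fin r) ℝ} (hA : A.PosDef)
    (C : Matrix (Fin r) (Fin r) ℝ) : ∃ X, A * X + X * A = C := by
  let L : Matrix (Fin r) (Fin r) ℝ →ₗ[ℝ] Matrix (Fin r) (Fin r) ℝ :=
    { toFun := fun X => A * X + X * A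
      map_add' := by intro X Y; noncomm_ring
      map_smul' := by intro c X; simp [Matrix.mul_smul, Matrix.smul_mul, smul_add] }
  have hinj : Function.Injective L := by
    rw [injective_iff_map_eq_zero']
    intro X
    constructor
    · intro h; exact lyapunov_inj hA h
    · intro h; simp [L, h]
  have hsurj : Function.Surjective L :=
    (LinearMap.injective_iff_surjective (f := L)).mp hinj
  obtain ⟨X, hX⟩ := hsurj C
  exact ⟨X, hX⟩

theorem stmt9 {r : ℕ} (A S : Matrix (Fin r) (Fin r) ℝ) (hA : A.PosDef) (hS : S.IsSymm) :
    ∃! S' : Matrix (Fin r) (Fin r) ℝ, S' + S'ᵀ = S ∧ S' * A = A * S'ᵀ := by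
  have hAt : Aᵀ = A := by
    have := hA.1
    rw [Matrix.IsHermitian] at this
    rw [← Matrix.conjTranspose_eq_transpose_of_trivial]; exact this
  have hSt : Sᵀ = S := hS
  obtain ⟨S₀, hS₀⟩ := lyapunov_exists hA (A * S)
  -- transpose of the equation
  have hS₀t : A * S₀ᵀ + S₀ᵀ * A = S * A := by
    have := congrArg Matrix.transpose hS₀
    simp only [Matrix.transpose_add, Matrix.transpose_mul, hAt, hSt] at this
    linear_combination (norm := noncomm_ring) this
  have hsum : S₀ + S₀ᵀ = S := by
    have hkey : A * (S₀ + S₀ᵀ - S) + (S₀ + S₀ᵀ - S) * A = 0 := by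
      have hLS : A * S + S * A = A * S + S * A := rfl
      noncomm_ring
      linear_combination (norm := noncomm_ring) hS₀ + hS₀t
    have := lyapunov_inj hA hkey
    linear_combination (norm := noncomm_ring) this
  have hcomm : S₀ * A = A * S₀ᵀ := by
    have : A * S₀ᵀ = A * S - A * S₀ := by
      rw [← hsum]; noncomm_ring
    rw [this]
    linear_combination (norm := noncomm_ring) hS₀
  refine ⟨S₀, ⟨hsum, hcomm⟩, ?_⟩
  rintro Y ⟨hY1, hY2⟩
  have hYeq : A * Y + Y * A = A * S := by
    rw [← hY1, Matrix.mul_add, ← hY2]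
  have hkey : A * (Y - S₀) + (Y - S₀) * A = 0 := by
    linear_combination (norm := noncomm_ring) hYeq - hS₀
  have := lyapunov_inj hA hkey
  linear_combination (norm := noncomm_ring) this
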